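/- Let C = D ⊕ E be a direct sum of coalgebras over a field k, where D = k·g is a one-dimensional coalgebra with Δ(g) = g⊗g, ε(g)=1, and E is a matrix coalgebra of rank n with basis (e_{ij}) satisfying Δ(e_{ij}) = Σ_k e_{ik} ⊗ e_{kj}, ε(e_{ij}) = δ_{ij}. If elements x₁,…,x_n ∈ C satisfy Δ(x_i) = x_i ⊗ g + Σ_j e_{ij} ⊗ x_j for all i, then there exist scalars a₁,…,a_n ∈ k with x_i = a_i g − Σ_j a_j e_{ij} for all i. -/

import Mathlib

open Coalgebra TensorProduct

/-- Lemma 2.2 of the paper: in a coalgebra `C = D ⊕ E` with `D = k·g` group-like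
and `E` a rank `n` matrix coalgebra with basis `(e i j)`, if elements `x i`
satisfy `Δ(x i) = x i ⊗ g + Σ_j e i j ⊗ x j`, then there are scalars `a i`
with `x i = a i • g − Σ_j a j • e i j`. The direct sum decomposition is
encoded by requiring that `g` together with the `e i j` form a basis of `C`. -/
theorem stmt2 (k C : Type*) [Field k] [AddCommGroup C] [Module k C]
    [Coalgebra k C] (n : ℕ) (g : C) (e : Fin n → Fin n → C)
    (hg : comul (R := k) g = g ⊗ₜ[k] g) (hεg : counit (R := k) g = 1)
    (he : ∀ i j, comul (R := k) (e i j) = ∑ l, e i l ⊗ₜ[k] e l j)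
    (hεe : ∀ i j, counit (R := k) (e i j) = if i = j then (1 : k) else 0)
    (hli : LinearIndependent k
      (Sum.elim (fun _ : Unit => g) (fun q : Fin n × Fin n => e q.1 q.2)))
    (hspan : Submodule.span k (Set.range
      (Sum.elim (fun _ : Unit => g) (fun q : Fin n × Fin n => e q.1 q.2))) = ⊤)
    (x : Fin n → C)
    (hx : ∀ i, comul (R := k) (x i) = x i ⊗ₜ[k] g + ∑ j, e i j ⊗ₜ[k] x j) :
    ∃ a : Fin n → k, ∀ i, x i = a i • g - ∑ j, a j • e i j := by
  classical
  let B : Module.Basis (Unit ⊕ Fin n × Fin n) k C := Module.Basis.mk hli hspan.ge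
  have hBg : B (Sum.inl ()) = g := by simp [B, Module.Basis.mk_apply]
  have hBe : ∀ p q, B (Sum.inr (p, q)) = e p q := by
    intro p q; simp [B, Module.Basis.mk_apply]
  set a : Fin n → k := fun i => B.repr (x i) (Sum.inl ()) with ha
  set b : Fin n → Fin n → Fin n → k := fun i p q => B.repr (x i) (Sum.inr (p, q)) with hb
  have r1 : B.repr g (Sum.inl ()) = 1 := by
    rw [← hBg, B.repr_self]; simp
  have r2 : ∀ p' q', B.repr (e p' q') (Sum.inl ()) = 0 := by
    intro p' q'; rw [← hBe, B.repr_self]; simp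
  have r3 : ∀ p q, B.repr g (Sum.inr (p, q)) = 0 := by
    intro p q; rw [← hBg, B.repr_self]; simp
  have r4 : ∀ p q p' q', B.repr (e p' q') (Sum.inr (p, q))
      = if (p', q') = (p, q) then 1 else 0 := by
    intro p q p' q'; rw [← hBe p' q', B.repr_self]
    simp [Finsupp.single_apply]
  have hxe : ∀ i, x i = a i • g + ∑ p, ∑ q, b i p q • e p q := by
    intro i
    conv_lhs => rw [← B.sum_repr (x i)]
    rw [Fintype.sum_sum_type]
    simp [Fintype.sum_prod_type, hBg, hBe]
    rfl
  have hbval : ∀ i p q, b i p q = - (if p = i then a q else 0) := by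
    intro i p q
    let f := B.coord (Sum.inr (p, q))
    let h := B.coord (Sum.inl ())
    let φ : C ⊗[k] C →ₗ[k] k := (LinearMap.mul' k k).comp (TensorProduct.map f h)
    have hφ : ∀ u w : C, φ (u ⊗ₜ[k] w)
        = B.repr u (Sum.inr (p, q)) * B.repr w (Sum.inl ()) := by
      intro u w; simp [φ, f, h]
    have key : φ (comul (R := k) (x i)) = φ (x i ⊗ₜ[k] g + ∑ j, e i j ⊗ₜ[k] x j) :=
      congrArg φ (hx i)
    have L : φ (comul (R := k) (x i)) = 0 := by
      rw [hxe i]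
      simp [map_add, map_smul, map_sum, hg, he, hφ, r1, r2, r3]
    have R : φ (x i ⊗ₜ[k] g + ∑ j, e i j ⊗ₜ[k] x j)
        = b i p q + (if p = i then a q else 0) := by
      simp only [map_add, map_sum, hφ, r1, r4, mul_one]
      congr 1
      have step : ∀ j, (if (i, j) = (p, q) then (1 : k) else 0) *
          B.repr (x j) (Sum.inl ()) = if i = p then (if j = q then a j else 0) else 0 := by
        intro j
        by_cases hip : i = p <;> by_cases hjq : j = q <;>
          simp [hip, hjq, Prod.ext_iff, a]
      rw [Finset.sum_congr rfl fun j _ => step j]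
      by_cases hip : i = p
      · subst hip; simp [Finset.sum_ite_eq']
      · rw [if_neg fun hpi => hip hpi.symm]; simp [hip]
    rw [L, R] at key
    exact eq_neg_of_add_eq_zero_left key.symm
  refine ⟨a, fun i => ?_⟩
  rw [hxe i]
  have hcol : ∀ p, ∑ q, b i p q • e p q = if p = i then -∑ j, a j • e i j else 0 := by
    intro p
    rcases eq_or_ne p i with h' | h'
    · subst h'
      simp [hbval, Finset.sum_neg_distrib]
    · simp [hbval, h']
  simp only [hcol, Finset.sum_ite_eq', Finset.mem_univ, if_true]
  rw [sub_eq_add_neg]
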